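/- Let B be the biadjacency matrix of a forest F whose two sides each have m vertices. Then det(B) ≠ 0 if and only if F has a perfect matching. Moreover, a forest has at most one perfect matching. -/

import Mathlib

open Classical in
theorem forest_pm_unique {V : Type*} [Fintype V] {G : SimpleGraph V} (s : V → Bool)
    (hbip : ∀ a b, G.Adj a b → s a ≠ s b)
    (hforest : G.IsAcyclic) {M N : G.Subgraph}
    (hM : M.IsPerfectMatching) (hN : N.IsPerfectMatching) : M = N := by
  have hM' := SimpleGraph.Subgraph.isPerfectMatching_iff.mp hM
  have hN' := SimpleGraph.Subgraph.isPerfectMatching_iff.mp hN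
  set fM : V → V := fun v => (hM' v).choose with hfMdef
  set fN : V → V := fun v => (hN' v).choose with hfNdef
  have hfM : ∀ v, M.Adj v (fM v) := fun v => (hM' v).choose_spec.1
  have hfN : ∀ v, N.Adj v (fN v) := fun v => (hN' v).choose_spec.1
  have hfMu : ∀ v w, M.Adj v w → w = fM v := fun v w h => (hM' v).choose_spec.2 w h
  have hfNu : ∀ v w, N.Adj v w → w = fN v := fun v w h => (hN' v).choose_spec.2 w h
  have hMinv : Function.Involutive fM := fun v => (hfMu (fM v) v (hfM v).symm).symm
  have hNinv : Function.Involutive fN := fun v => (hfNu (fN v) v (hfN v).symm).symm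
  suffices hsuf : ∀ v, fM v = fN v by
    apply SimpleGraph.Subgraph.ext
    · rw [hM.2.verts_eq_univ, hN.2.verts_eq_univ]
    · funext a b
      apply propext
      constructor
      · intro h
        have := (hfMu a b h).symm
        rw [hsuf a] at this
        exact this ▸ hfN a
      · intro h
        have := (hfNu a b h).symm
        rw [← hsuf a] at this
        exact this ▸ hfM a
  by_contra hcon
  push_neg at hcon
  obtain ⟨v, hv⟩ := hcon
  -- side lemmas
  have hsM : ∀ x, s (fM x) ≠ s x := fun x => (hbip _ _ (M.adj_sub (hfM x))).symm
  have hsN : ∀ x, s (fN x) ≠ s x := fun x => (hbip _ _ (N.adj_sub (hfN x))).symm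
  have bool3 : ∀ a b c : Bool, a ≠ b → b ≠ c → a = c := by decide
  -- permutations
  set eM : Equiv.Perm V := hMinv.toPerm fM with heM
  set eN : Equiv.Perm V := hNinv.toPerm fN with heN
  set ρ : Equiv.Perm V := eM.trans eN with hρ
  have hρapp : ∀ x, ρ x = fN (fM x) := fun x => rfl
  set σp : Equiv.Perm V := ρ⁻¹ with hσpdef
  have hσapp : ∀ x, σp x = fM (fN x) := by
    intro x
    apply ρ.injective
    rw [show ρ (σp x) = x from ρ.apply_symm_apply x, hρapp, hMinv, hNinv]
  have hσside : ∀ x, s (σp x) = s x := by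
    intro x
    rw [hσapp]
    exact bool3 _ _ _ (hsM (fN x)) (hsN x)
  have hpowside : ∀ j : ℕ, s ((σp ^ j) v) = s v := by
    intro j
    induction j with
    | zero => rfl
    | succ j ih => rw [pow_succ', Equiv.Perm.mul_apply, hσside, ih]
  -- the deleted-edge graph
  set G' : SimpleGraph V := G \ SimpleGraph.fromEdgeSet {s(v, fM v)} with hG'
  have hadj' : ∀ a b, G.Adj a b → s(a, b) ≠ s(v, fM v) → G'.Adj a b := by
    intro a b hab hne
    rw [hG', SimpleGraph.sdiff_adj, SimpleGraph.fromEdgeSet_adj]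
    exact ⟨hab, fun h => hne h.1⟩
  have key : ∀ j : ℕ, G'.Reachable v ((σp ^ j) v) := by
    intro j
    induction j with
    | zero =>
      simp only [pow_zero, Equiv.Perm.one_apply]
      exact SimpleGraph.Reachable.refl v
    | succ j ih =>
      set x := (σp ^ j) v with hx
      have hxs : s x = s v := hpowside j
      have hstep : (σp ^ (j + 1)) v = fM (fN x) := by
        rw [pow_succ', Equiv.Perm.mul_apply, ← hx, hσapp]
      by_cases hc : fN x = fM v
      · have : (σp ^ (j + 1)) v = v := by rw [hstep, hc, hMinv]
        rw [this]
      · have h1 : G'.Adj x (fN x) := by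
          apply hadj' _ _ (N.adj_sub (hfN x))
          intro heq
          rw [Sym2.eq_iff] at heq
          rcases heq with ⟨h1, h2⟩ | ⟨h1, h2⟩
          · rw [h1] at h2; exact hv h2.symm
          · exact hsM v (h1 ▸ hxs)
        have h2 : G'.Adj (fN x) (fM (fN x)) := by
          apply hadj' _ _ (M.adj_sub (hfM (fN x)))
          intro heq
          rw [Sym2.eq_iff] at heq
          rcases heq with ⟨h1, h2⟩ | ⟨h1, h2⟩
          · -- fN x = v and fM (fN x) = fM v
            have : x = fN v := by rw [← h1, hNinv]
            exact hsN v (this ▸ hxs)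
          · exact hc h1
        rw [hstep]
        exact (ih.trans h1.reachable).trans h2.reachable
  -- conclude reachability v to fM v
  set k : ℕ := orderOf ρ with hk
  have hkpos : 0 < k := orderOf_pos ρ
  have hρk : ρ ^ k = 1 := pow_orderOf_eq_one ρ
  have hpenult : σp ^ (k - 1) = ρ := by
    have h1 : ρ ^ (k - 1) * ρ = 1 := by
      rw [← pow_succ, Nat.sub_add_cancel hkpos]
      exact hρk
    have h2 : ρ ^ (k - 1) = ρ⁻¹ := eq_inv_of_mul_eq_one_left h1
    rw [hσpdef, inv_pow, h2, inv_inv]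
  have hreachz : G'.Reachable v (fN (fM v)) := by
    have := key (k - 1)
    rwa [hpenult, hρapp] at this
  have hlast : G'.Adj (fN (fM v)) (fM v) := by
    have hNN : N.Adj (fN (fM v)) (fM v) := by
      have := hfN (fN (fM v))
      rwa [hNinv] at this
    apply hadj' _ _ (N.adj_sub hNN)
    intro heq
    rw [Sym2.eq_iff] at heq
    rcases heq with ⟨h1, h2⟩ | ⟨h1, h2⟩
    · -- fN (fM v) = v ⇒ fM v = fN v
      apply hv
      rw [← hNinv (fM v), h1]
    · -- fM v = v : contradicts irreflexivity
      exact G.irrefl (h2 ▸ M.adj_sub (hfM v))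
  have hreach : G'.Reachable v (fM v) := hreachz.trans hlast.reachable
  have hb := (SimpleGraph.isAcyclic_iff_forall_adj_isBridge.mp hforest) (M.adj_sub (hfM v))
  rw [SimpleGraph.isBridge_iff] at hb
  exact hb hreach

open Classical in
/-- The perfect-matching subgraph induced by a permutation all of whose
left-to-right pairs are edges. -/
def permSubgraph {m : ℕ} (G : SimpleGraph (Fin m ⊕ Fin m)) (σ : Equiv.Perm (Fin m))
    (hσ : ∀ i, G.Adj (Sum.inl i) (Sum.inr (σ i))) : G.Subgraph where
  verts := Set.univ
  Adj a b := (∃ i, a = Sum.inl i ∧ b = Sum.inr (σ i)) ∨ (∃ i, b = Sum.inl i ∧ a = Sum.inr (σ i))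
  adj_sub := by
    rintro a b (⟨i, rfl, rfl⟩ | ⟨i, rfl, rfl⟩)
    · exact hσ i
    · exact (hσ i).symm
  edge_vert := by intros; trivial
  symm := by
    constructor
    rintro a b (h | h)
    · exact Or.inr h
    · exact Or.inl h

open Classical in
lemma permSubgraph_isPerfectMatching {m : ℕ} (G : SimpleGraph (Fin m ⊕ Fin m))
    (σ : Equiv.Perm (Fin m)) (hσ : ∀ i, G.Adj (Sum.inl i) (Sum.inr (σ i))) :
    (permSubgraph G σ hσ).IsPerfectMatching := by
  rw [SimpleGraph.Subgraph.isPerfectMatching_iff]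
  intro v
  rcases v with i | j
  · refine ⟨Sum.inr (σ i), Or.inl ⟨i, rfl, rfl⟩, ?_⟩
    rintro w (⟨i', hi, rfl⟩ | ⟨i', rfl, hi⟩)
    · rw [Sum.inl.injEq] at hi; rw [hi]
    · exact absurd hi (by simp)
  · refine ⟨Sum.inl (σ.symm j), Or.inr ⟨σ.symm j, rfl, by simp⟩, ?_⟩
    rintro w (⟨i', hi, rfl⟩ | ⟨i', rfl, hi⟩)
    · exact absurd hi (by simp)
    · rw [Sum.inr.injEq] at hi
      rw [show i' = σ.symm j from by rw [hi]; simp]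

open Classical in
/-- Let `F` be a forest on vertex set `[m] ⊕ [m]` that is bipartite with the two summands
as sides, and let `B` be its biadjacency matrix (`B i j = 1` iff the `i`-th left vertex is
adjacent to the `j`-th right vertex). Then `det B ≠ 0` iff `F` has a perfect matching;
moreover `F` has at most one perfect matching. -/
theorem forest_biadjacency_det_ne_zero_iff {m : ℕ}
    (G : SimpleGraph (Fin m ⊕ Fin m))
    (hbip : ∀ a b, G.Adj a b → (a.isLeft ∧ b.isRight) ∨ (a.isRight ∧ b.isLeft))
    (hforest : G.IsAcyclic) :
    ((Matrix.of fun i j : Fin m =>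
        if G.Adj (Sum.inl i) (Sum.inr j) then (1 : ℚ) else 0).det ≠ 0 ↔
      ∃ M : G.Subgraph, M.IsPerfectMatching) ∧
    ∀ M N : G.Subgraph, M.IsPerfectMatching → N.IsPerfectMatching → M = N := by
  have hbip' : ∀ a b, G.Adj a b → Sum.isLeft a ≠ Sum.isLeft b := by
    intro a b h
    rcases hbip a b h with ⟨h1, h2⟩ | ⟨h1, h2⟩ <;> cases a <;> cases b <;> simp_all
  have huniq : ∀ M N : G.Subgraph, M.IsPerfectMatching → N.IsPerfectMatching → M = N :=
    fun M N hM hN => forest_pm_unique Sum.isLeft hbip' hforest hM hN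
  refine ⟨?_, huniq⟩
  -- det computation
  set B : Matrix (Fin m) (Fin m) ℚ :=
    Matrix.of fun i j : Fin m => if G.Adj (Sum.inl i) (Sum.inr j) then (1 : ℚ) else 0 with hB
  have hdet : B.det = ∑ τ : Equiv.Perm (Fin m),
      if (∀ i, G.Adj (Sum.inl (τ i)) (Sum.inr i)) then ((Equiv.Perm.sign τ : ℤ) : ℚ) else 0 := by
    rw [Matrix.det_apply]
    apply Finset.sum_congr rfl
    intro τ _
    have : ∏ i, B (τ i) i = if (∀ i, G.Adj (Sum.inl (τ i)) (Sum.inr i)) then (1 : ℚ) else 0 := by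
      rw [show ∏ i, B (τ i) i
          = ∏ i, if G.Adj (Sum.inl (τ i)) (Sum.inr i) then (1 : ℚ) else 0 from rfl]
      convert Fintype.prod_boole (M₀ := ℚ) (p := fun i => G.Adj (Sum.inl (τ i)) (Sum.inr i)) using 2
    rw [this]
    by_cases h : ∀ i, G.Adj (Sum.inl (τ i)) (Sum.inr i)
    · simp [h, Units.smul_def]
    · simp [h]
  constructor
  · intro hne
    have : ∃ τ : Equiv.Perm (Fin m), ∀ i, G.Adj (Sum.inl (τ i)) (Sum.inr i) := by
      by_contra hno
      push_neg at hno
      apply hne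
      rw [hdet]
      apply Finset.sum_eq_zero
      intro τ _
      rw [if_neg]
      intro hall
      obtain ⟨i, hi⟩ := hno τ
      exact hi (hall i)
    obtain ⟨τ, hτ⟩ := this
    refine ⟨permSubgraph G τ⁻¹ ?_, permSubgraph_isPerfectMatching _ _ _⟩
    intro i
    have := hτ (τ⁻¹ i)
    rwa [← Equiv.Perm.mul_apply, mul_inv_cancel, Equiv.Perm.one_apply] at this
  · rintro ⟨M, hMpm⟩
    have hM' := SimpleGraph.Subgraph.isPerfectMatching_iff.mp hMpm
    set fM : (Fin m ⊕ Fin m) → (Fin m ⊕ Fin m) := fun v => (hM' v).choose with hfMdef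
    have hfM : ∀ v, M.Adj v (fM v) := fun v => (hM' v).choose_spec.1
    have hfMu : ∀ v w, M.Adj v w → w = fM v := fun v w h => (hM' v).choose_spec.2 w h
    have hMinv : Function.Involutive fM := fun v => (hfMu (fM v) v (hfM v).symm).symm
    have hg : ∀ i : Fin m, ∃ j : Fin m, fM (Sum.inl i) = Sum.inr j := by
      intro i
      rcases hbip _ _ (M.adj_sub (hfM (Sum.inl i))) with ⟨h1, h2⟩ | ⟨h1, h2⟩
      · exact Sum.isRight_iff.mp h2
      · simp at h1
    set g : Fin m → Fin m := fun i => (hg i).choose with hgdef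
    have hgspec : ∀ i, fM (Sum.inl i) = Sum.inr (g i) := fun i => (hg i).choose_spec
    have hginj : Function.Injective g := by
      intro i i' h
      have : fM (Sum.inl i) = fM (Sum.inl i') := by rw [hgspec, hgspec, h]
      have := hMinv.injective this
      rwa [Sum.inl.injEq] at this
    set σ : Equiv.Perm (Fin m) := Equiv.ofBijective g (Finite.injective_iff_bijective.mp hginj)
      with hσdef
    have hσg : ∀ i, σ i = g i := fun i => rfl
    have hadjσ : ∀ i, M.Adj (Sum.inl i) (Sum.inr (σ i)) := by
      intro i
      rw [hσg, ← hgspec]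
      exact hfM (Sum.inl i)
    have hPσ : ∀ i, G.Adj (Sum.inl (σ⁻¹ i)) (Sum.inr i) := by
      intro i
      have := M.adj_sub (hadjσ (σ⁻¹ i))
      rwa [← Equiv.Perm.mul_apply, mul_inv_cancel, Equiv.Perm.one_apply] at this
    have hunique : ∀ τ : Equiv.Perm (Fin m),
        (∀ i, G.Adj (Sum.inl (τ i)) (Sum.inr i)) → τ = σ⁻¹ := by
      intro τ hτ
      have hτ' : ∀ i, G.Adj (Sum.inl i) (Sum.inr (τ⁻¹ i)) := by
        intro i
        have := hτ (τ⁻¹ i)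
        rwa [← Equiv.Perm.mul_apply, mul_inv_cancel, Equiv.Perm.one_apply] at this
      have hMeq : permSubgraph G τ⁻¹ hτ' = M :=
        huniq _ _ (permSubgraph_isPerfectMatching _ _ _) hMpm
      have hadjτ : ∀ i, M.Adj (Sum.inl i) (Sum.inr (τ⁻¹ i)) := by
        intro i
        rw [← hMeq]
        exact Or.inl ⟨i, rfl, rfl⟩
      have : ∀ i, τ⁻¹ i = σ i := by
        intro i
        have h1 := hfMu _ _ (hadjτ i)
        have h2 := hfMu _ _ (hadjσ i)
        rw [← h2] at h1
        rwa [Sum.inr.injEq] at h1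
      have : τ⁻¹ = σ := Equiv.ext this
      rw [← this, inv_inv]
    rw [hdet, Finset.sum_eq_single σ⁻¹]
    · rw [if_pos hPσ]
      rcases Int.units_eq_one_or (Equiv.Perm.sign σ⁻¹) with h | h <;> rw [h] <;> norm_num
    · intro τ _ hτne
      rw [if_neg]
      intro hall
      exact hτne (hunique τ hall)
    · intro h
      exact absurd (Finset.mem_univ σ⁻¹) h
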